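/- Let Γ be a finite simple graph each of whose edges is colored red, green, or blue, with G green edges and B blue edges. For each ordered pair (u,v) of vertices such that uv is a red edge, let d⁺(u,v) be the number of vertices w such that uw is a blue edge and vw is a green edge. Then the sum of d⁺(u,v)^2 over all ordered pairs (u,v) inducing a red edge is at most G·B. -/

import Mathlib

open scoped Classical

noncomputable section

namespace RainbowTri

variable {V : Type*} [Fintype V]

/-- The finset of edges of `Γ` having color `c` (red = 0, green = 1, blue = 2). -/
def colorEdges (Γ : SimpleGraph V) (col : Sym2 V → Fin 3) (c : Fin 3) : Finset (Sym2 V) :=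
  Finset.univ.filter (fun e => e ∈ Γ.edgeSet ∧ col e = c)

/-- The finset of rainbow triangles: 3-sets of pairwise adjacent vertices whose three
edges receive three distinct colors. -/
def rainbowTriangles (Γ : SimpleGraph V) (col : Sym2 V → Fin 3) : Finset (Finset V) :=
  Finset.univ.filter (fun s => ∃ a b c : V, s = {a, b, c} ∧
    Γ.Adj a b ∧ Γ.Adj a c ∧ Γ.Adj b c ∧
    col s(a, b) ≠ col s(a, c) ∧ col s(a, b) ≠ col s(b, c) ∧ col s(a, c) ≠ col s(b, c))

/-- The finset of properly 3-edge-colored copies of `K₄`: 4-sets of pairwise adjacent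
vertices on which each color appears on exactly two (disjoint) of the six edges. -/
def properK4s (Γ : SimpleGraph V) (col : Sym2 V → Fin 3) : Finset (Finset V) :=
  Finset.univ.filter (fun s => ∃ a b c d : V, s = {a, b, c, d} ∧
    Γ.Adj a b ∧ Γ.Adj a c ∧ Γ.Adj a d ∧ Γ.Adj b c ∧ Γ.Adj b d ∧ Γ.Adj c d ∧
    col s(a, b) = col s(c, d) ∧ col s(a, c) = col s(b, d) ∧ col s(a, d) = col s(b, c) ∧
    col s(a, b) ≠ col s(a, c) ∧ col s(a, b) ≠ col s(a, d) ∧ col s(a, c) ≠ col s(a, d))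

/-- The color pattern of a proper 3-edge-coloring of `K₄` on vertex set `Fin 4`:
opposite edges get the same color ({0,1},{2,3} ↦ 0; {0,2},{1,3} ↦ 1; {0,3},{1,2} ↦ 2). -/
def pairColor (i j : Fin 4) : Fin 3 :=
  ⟨((i.val ^^^ j.val) - 1) % 3, Nat.mod_lt _ (by norm_num)⟩

/-- `Γ` (with edge coloring `col`) is obtained from a blowup of a properly
3-edge-colored `K₄` by possibly adding a set of isolated vertices: vertices mapped to
`none` are isolated, vertices are adjacent iff they lie in distinct parts, and colors
between parts follow the proper `K₄`-pattern up to a permutation `σ` of the colors. -/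
def IsBlowupK4PlusIsolated (Γ : SimpleGraph V) (col : Sym2 V → Fin 3) : Prop :=
  ∃ (P : V → Option (Fin 4)) (σ : Equiv.Perm (Fin 3)),
    (∀ u v : V, Γ.Adj u v ↔ ∃ i j : Fin 4, i ≠ j ∧ P u = some i ∧ P v = some j) ∧
    (∀ (u v : V) (i j : Fin 4), P u = some i → P v = some j → Γ.Adj u v →
      col s(u, v) = σ (pairColor i j))

/-- As `IsBlowupK4PlusIsolated`, where moreover the four parts have equal size. -/
def IsBalancedBlowupK4PlusIsolated (Γ : SimpleGraph V) (col : Sym2 V → Fin 3) : Prop :=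
  ∃ (P : V → Option (Fin 4)) (σ : Equiv.Perm (Fin 3)),
    (∀ u v : V, Γ.Adj u v ↔ ∃ i j : Fin 4, i ≠ j ∧ P u = some i ∧ P v = some j) ∧
    (∀ (u v : V) (i j : Fin 4), P u = some i → P v = some j → Γ.Adj u v →
      col s(u, v) = σ (pairColor i j)) ∧
    (∀ i j : Fin 4, (Finset.univ.filter (fun v => P v = some i)).card
      = (Finset.univ.filter (fun v => P v = some j)).card)

/-- `Γ` (with edge coloring `col`) is a balanced blowup of a properly 3-edge-colored
`K₄` (no extra isolated vertices). -/
def IsBalancedBlowupK4 (Γ : SimpleGraph V) (col : Sym2 V → Fin 3) : Prop :=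
  ∃ (P : V → Fin 4) (σ : Equiv.Perm (Fin 3)),
    (∀ u v : V, Γ.Adj u v ↔ P u ≠ P v) ∧
    (∀ u v : V, Γ.Adj u v → col s(u, v) = σ (pairColor (P u) (P v))) ∧
    (∀ i j : Fin 4, (Finset.univ.filter (fun v => P v = i)).card
      = (Finset.univ.filter (fun v => P v = j)).card)

/-- `d⁺(u,v)`: the number of vertices `w` with `uw` blue and `vw` green. -/
def dPlus (Γ : SimpleGraph V) (col : Sym2 V → Fin 3) (u v : V) : ℕ :=
  (Finset.univ.filter (fun w => Γ.Adj u w ∧ col s(u, w) = 2 ∧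
    Γ.Adj v w ∧ col s(v, w) = 1)).card

/-- `d⁻(u,v)`: the number of vertices `w` with `uw` green and `vw` blue. -/
def dMinus (Γ : SimpleGraph V) (col : Sym2 V → Fin 3) (u v : V) : ℕ :=
  (Finset.univ.filter (fun w => Γ.Adj u w ∧ col s(u, w) = 1 ∧
    Γ.Adj v w ∧ col s(v, w) = 2)).card

/-- `d_K(u,v)`: the number of ordered pairs `(w,x)` with `wx` red, `uw`, `vx` green
and `ux`, `vw` blue. -/
def dK (Γ : SimpleGraph V) (col : Sym2 V → Fin 3) (u v : V) : ℕ :=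
  (Finset.univ.filter (fun p : V × V => Γ.Adj p.1 p.2 ∧ col s(p.1, p.2) = 0 ∧
    Γ.Adj u p.1 ∧ col s(u, p.1) = 1 ∧ Γ.Adj v p.2 ∧ col s(v, p.2) = 1 ∧
    Γ.Adj u p.2 ∧ col s(u, p.2) = 2 ∧ Γ.Adj v p.1 ∧ col s(v, p.1) = 2)).card

/-- Ordered pairs of vertices inducing a red edge. -/
def redPairs (Γ : SimpleGraph V) (col : Sym2 V → Fin 3) : Finset (V × V) :=
  Finset.univ.filter (fun p => Γ.Adj p.1 p.2 ∧ col s(p.1, p.2) = 0)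

/-- The set `S` of ordered tuples `(u,v,x,y)` with `uv` red, `ux`, `uy` blue and
`vx`, `vy` green (`x = y` allowed). -/
def tupleSet (Γ : SimpleGraph V) (col : Sym2 V → Fin 3) : Finset (V × V × V × V) :=
  Finset.univ.filter (fun t => Γ.Adj t.1 t.2.1 ∧ col s(t.1, t.2.1) = 0 ∧
    Γ.Adj t.1 t.2.2.1 ∧ col s(t.1, t.2.2.1) = 2 ∧
    Γ.Adj t.1 t.2.2.2 ∧ col s(t.1, t.2.2.2) = 2 ∧
    Γ.Adj t.2.1 t.2.2.1 ∧ col s(t.2.1, t.2.2.1) = 1 ∧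
    Γ.Adj t.2.1 t.2.2.2 ∧ col s(t.2.1, t.2.2.2) = 1)

/-- The sum of `d⁺(u,v)²` over all ordered pairs `(u,v)` inducing a red edge is at
most `G·B`. -/
theorem stmt10 (Γ : SimpleGraph V) (col : Sym2 V → Fin 3) (G B : ℕ)
    (hG : G = (colorEdges Γ col 1).card)
    (hB : B = (colorEdges Γ col 2).card) :
    ∑ p ∈ redPairs Γ col, (dPlus Γ col p.1 p.2) ^ 2 ≤ G * B := by
  classical
  subst hG hB
  set A : V × V → Finset V := fun p => Finset.univ.filter (fun w => Γ.Adj p.1 w ∧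
    col s(p.1, w) = 2 ∧ Γ.Adj p.2 w ∧ col s(p.2, w) = 1) with hA
  have hd : ∀ p ∈ redPairs Γ col, (dPlus Γ col p.1 p.2) ^ 2 = ((A p) ×ˢ (A p)).card := by
    intro p _
    rw [Finset.card_product, sq]
    rfl
  rw [Finset.sum_congr rfl hd, ← Finset.card_sigma,
    ← Finset.card_product (colorEdges Γ col 1) (colorEdges Γ col 2)]
  apply Finset.card_le_card_of_injOn
    (fun t : Σ _ : V × V, V × V => (s(t.1.2, t.2.1), s(t.1.1, t.2.2)))
  · rintro ⟨⟨u, v⟩, ⟨x, y⟩⟩ ht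
    rw [Finset.mem_coe, Finset.mem_sigma] at ht
    obtain ⟨hp, hq⟩ := ht
    rw [Finset.mem_product] at hq
    obtain ⟨hx, hy⟩ := hq
    simp only [redPairs, hA, Finset.mem_filter, Finset.mem_univ, true_and] at hp hx hy
    rw [Finset.mem_coe, Finset.mem_product]
    constructor <;> simp only [colorEdges, Finset.mem_filter, Finset.mem_univ, true_and,
      SimpleGraph.mem_edgeSet]
    · exact ⟨hx.2.2.1, hx.2.2.2⟩
    · exact ⟨hy.1, hy.2.1⟩
  · rintro ⟨⟨u, v⟩, ⟨x, y⟩⟩ ht ⟨⟨u', v'⟩, ⟨x', y'⟩⟩ ht' heq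
    rw [Finset.mem_coe, Finset.mem_sigma] at ht ht'
    obtain ⟨hp, hq⟩ := ht
    obtain ⟨hp', hq'⟩ := ht'
    rw [Finset.mem_product] at hq hq'
    obtain ⟨hx, hy⟩ := hq
    obtain ⟨hx', hy'⟩ := hq'
    simp only [redPairs, hA, Finset.mem_filter, Finset.mem_univ, true_and] at hp hx hy hp' hx' hy'
    simp only [Prod.mk.injEq, Sym2.eq_iff] at heq
    obtain ⟨h1 | h1, h2 | h2⟩ := heq
    · obtain ⟨rfl, rfl⟩ := h1; obtain ⟨rfl, rfl⟩ := h2; rfl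
    · -- v'=v, x'=x, u=y', y=u'
      obtain ⟨rfl, rfl⟩ := h1
      obtain ⟨rfl, rfl⟩ := h2
      -- hp' : col s(y, v) = 0, hy : col s(v, y) = 1
      exfalso
      have := hp'.2
      rw [Sym2.eq_swap] at this
      rw [hy.2.2.2] at this
      exact absurd this (by decide)
    · -- v=x', x=v'
      obtain ⟨rfl, rfl⟩ := h1
      obtain ⟨rfl, rfl⟩ := h2
      -- hx' : col s(u, v) = 2 (from hx' second conj? hx' : adj u' x' ...), check below
      exfalso
      have := hx'.2.1  -- col s(u', x') = 2 with u'=u, x'=v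
      rw [hp.2] at this
      exact absurd this (by decide)
    · obtain ⟨rfl, rfl⟩ := h1
      obtain ⟨rfl, rfl⟩ := h2
      -- u'=y, v'=x, x'=v : hx'.2.1 : col s(y, v) = 2, hy : col s(v,y)=1
      exfalso
      have := hx'.2.1
      rw [Sym2.eq_swap] at this
      rw [hy.2.2.2] at this
      exact absurd this (by decide)

end RainbowTri
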